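/- Let f be a polynomial with complex coefficients, α a root of f of multiplicity exactly k+1, and write g(z) = (z−α)^{k+1}/f(z), which is holomorphic and nonzero at α. Then there exists a polynomial r of degree exactly k such that for every integer n ≥ 1, the residue of z^{n−1}/f(z) at z = α equals r(n) α^n. -/

import Mathlib

open Polynomial

section Aux
open Finset

lemma my_iteratedDerivWithin_of_isOpen {g : ℂ → ℂ} {U : Set ℂ} (hU : IsOpen U)
    {x : ℂ} (hx : x ∈ U) (m : ℕ) :
    iteratedDerivWithin m g U x = iteratedDeriv m g x := by
  rw [iteratedDerivWithin_eq_iteratedFDerivWithin, iteratedDeriv_eq_iteratedFDeriv,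
    iteratedFDerivWithin_of_isOpen m hU hx]

lemma my_diffAt {g : ℂ → ℂ} {U : Set ℂ} (hU : IsOpen U)
    (hg : ContDiffOn ℂ (⊤ : ℕ∞) g U) (m : ℕ) {x : ℂ} (hx : x ∈ U) :
    DifferentiableAt ℂ (iteratedDeriv m g) x := by
  have h1 : DifferentiableOn ℂ (iteratedDerivWithin m g U) U :=
    hg.differentiableOn_iteratedDerivWithin (by exact_mod_cast WithTop.coe_lt_top m)
      hU.uniqueDiffOn
  have h2 : DifferentiableAt ℂ (iteratedDerivWithin m g U) x :=
    (h1 x hx).differentiableAt (hU.mem_nhds hx)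
  refine h2.congr_of_eventuallyEq ?_
  filter_upwards [hU.mem_nhds hx] with y hy
  exact (my_iteratedDerivWithin_of_isOpen hU hy m).symm

lemma my_leibniz {f g : ℂ → ℂ} {U : Set ℂ} (hU : IsOpen U)
    (hf : ContDiff ℂ (⊤ : ℕ∞) f) (hg : ContDiffOn ℂ (⊤ : ℕ∞) g U) :
    ∀ m : ℕ, ∀ x ∈ U, iteratedDeriv m (fun z => f z * g z) x =
      ∑ j ∈ Finset.range (m + 1),
        (m.choose j : ℂ) * iteratedDeriv j f x * iteratedDeriv (m - j) g x := by
  intro m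
  induction m with
  | zero => intro x hx; simp
  | succ m IH =>
    intro x hx
    have hev : iteratedDeriv m (fun z => f z * g z) =ᶠ[nhds x]
        fun y => ∑ j ∈ Finset.range (m + 1),
          (m.choose j : ℂ) * (iteratedDeriv j f y * iteratedDeriv (m - j) g y) := by
      filter_upwards [hU.mem_nhds hx] with y hy
      rw [IH y hy]
      simp [mul_assoc]
    rw [iteratedDeriv_succ, hev.deriv_eq]
    have hF : ∀ j : ℕ, HasDerivAt (iteratedDeriv j f) (iteratedDeriv (j + 1) f x) x := by
      intro j
      have : DifferentiableAt ℂ (iteratedDeriv j f) x := by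
        have := (hf.iterate_deriv j).differentiable (by simp)
        simpa [iteratedDeriv_eq_iterate] using this x
      simpa [iteratedDeriv_succ] using this.hasDerivAt
    have hG : ∀ i : ℕ, HasDerivAt (iteratedDeriv i g) (iteratedDeriv (i + 1) g x) x := by
      intro i
      have := my_diffAt hU hg i hx
      simpa [iteratedDeriv_succ] using this.hasDerivAt
    have hder : HasDerivAt (fun y => ∑ j ∈ Finset.range (m + 1),
        (m.choose j : ℂ) * (iteratedDeriv j f y * iteratedDeriv (m - j) g y))
        (∑ j ∈ Finset.range (m + 1), (m.choose j : ℂ) *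
          (iteratedDeriv (j + 1) f x * iteratedDeriv (m - j) g x +
           iteratedDeriv j f x * iteratedDeriv (m - j + 1) g x)) x := by
      exact HasDerivAt.fun_sum fun j hj => ((hF j).mul (hG (m - j))).const_mul ((m.choose j : ℂ))
    rw [hder.deriv]
    -- now the binomial recombination
    have key : ∀ S : ℕ → ℂ,
        ∑ j ∈ Finset.range (m + 1), (m.choose j : ℂ) * (S (j+1)) +
        ∑ j ∈ Finset.range (m + 1), (m.choose j : ℂ) * (S j) =
        ∑ j ∈ Finset.range (m + 2), ((m+1).choose j : ℂ) * S j := by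
      intro S
      rw [Finset.sum_range_succ' (fun j => ((m+1).choose j : ℂ) * S j) (m+1)]
      have h2 : ∑ j ∈ Finset.range (m + 1), (m.choose j : ℂ) * S j =
          ∑ j ∈ Finset.range (m + 1), (m.choose (j+1) : ℂ) * S (j+1) + (m.choose 0 : ℂ) * S 0 := by
        have h4 := Finset.sum_range_succ' (fun j => (m.choose j : ℂ) * S j) (m+1)
        rw [Finset.sum_range_succ (fun j => (m.choose j : ℂ) * S j) (m+1)] at h4
        simpa [Nat.choose_succ_self] using h4
      rw [h2]
      have h3 : ∀ j, ((m+1).choose (j+1) : ℂ) = (m.choose j : ℂ) + (m.choose (j+1) : ℂ) := by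
        intro j; rw [Nat.choose_succ_succ]; push_cast; ring
      simp only [h3, add_mul]
      rw [Finset.sum_add_distrib]
      simp [Nat.choose_zero_right]
      ring
    have := key (fun j => iteratedDeriv j f x * iteratedDeriv (m + 1 - j) g x)
    simp only [mul_assoc]
    rw [← this, ← Finset.sum_add_distrib]
    refine Finset.sum_congr rfl fun j hj => ?_
    have hjm : j ≤ m := Nat.lt_succ_iff.mp (Finset.mem_range.mp hj)
    have e1 : m + 1 - (j + 1) = m - j := by omega
    have e2 : m - j + 1 = m + 1 - j := by omega
    rw [e1, e2]
    ring

lemma my_iteratedDeriv_pow (N j : ℕ) :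
    iteratedDeriv j (fun x : ℂ => x ^ N) = fun x : ℂ => (N.descFactorial j : ℂ) * x ^ (N - j) := by
  induction j with
  | zero => simp
  | succ j IH =>
    funext x
    rw [iteratedDeriv_succ, IH]
    have : deriv (fun x : ℂ => (N.descFactorial j : ℂ) * x ^ (N - j)) x =
        (N.descFactorial j : ℂ) * ((N - j : ℕ) * x ^ (N - j - 1)) := by
      simp [deriv_const_mul_field]
    rw [this, Nat.descFactorial_succ]
    push_cast
    rw [Nat.sub_sub]
    ring

lemma my_contDiff_eval (p : Polynomial ℂ) : ContDiff ℂ (⊤ : ℕ∞) fun z : ℂ => p.eval z := by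
  induction p using Polynomial.induction_on' with
  | add p q hp hq => simpa only [eval_add] using hp.add hq
  | monomial i a => simpa only [eval_monomial, id_eq] using contDiff_const.mul (contDiff_id.pow i)


end Aux

/-- if `α ≠ 0` is a root of `f` of multiplicity exactly `k+1`, say
`f = (X - α)^(k+1) * q` with `q(α) ≠ 0`, then there is a polynomial `r` of degree
exactly `k` such that for all integers `n ≥ 1` the residue of `z^{n-1}/f(z)` at `α`,
namely `(1/k!) (d/dz)^k (z^{n-1} (z-α)^{k+1}/f(z))|_{z=α} = (1/k!) (d/dz)^k (z^{n-1}/q(z))|_{z=α}`,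
equals `r(n) α^n`. -/
theorem stmt3 (f : Polynomial ℂ) (k : ℕ) (α : ℂ) (hα : α ≠ 0)
    (q : Polynomial ℂ) (hf : f = (Polynomial.X - Polynomial.C α) ^ (k + 1) * q)
    (hq : q.eval α ≠ 0) :
    ∃ r : Polynomial ℂ, r.degree = (k : WithBot ℕ) ∧
      ∀ n : ℕ, 1 ≤ n →
        (1 / (Nat.factorial k : ℂ)) *
          iteratedDeriv k (fun z : ℂ => z ^ (n - 1) / q.eval z) α
          = r.eval (n : ℂ) * α ^ n := by
  classical
  set U : Set ℂ := {z : ℂ | q.eval z ≠ 0} with hUdef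
  have hUo : IsOpen U := by
    have : U = (fun z : ℂ => q.eval z) ⁻¹' ({0}ᶜ) := by
      ext z; simp [hUdef]
    rw [this]
    exact (q.continuous_aeval.isOpen_preimage _ isOpen_compl_singleton)
  set h : ℂ → ℂ := fun z => (q.eval z)⁻¹ with hhdef
  have hg : ContDiffOn ℂ (⊤ : ℕ∞) h U :=
    (my_contDiff_eval q).contDiffOn.inv (fun x hx => hx)
  have hαU : α ∈ U := hq
  set D : ℕ → ℂ := fun j => iteratedDeriv (k - j) h α with hDdef
  set c : ℕ → ℂ := fun j =>
    (k.choose j : ℂ) * D j / ((k.factorial : ℂ) * α ^ (j + 1)) with hcdef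
  set P : ℕ → Polynomial ℂ := fun j => (descPochhammer ℂ j).comp (X - C 1) with hPdef
  have hPmonic : ∀ j, (P j).Monic := fun j => (monic_descPochhammer ℂ j).comp_X_sub_C 1
  have hPdeg : ∀ j, (P j).natDegree = j := fun j => by
    rw [hPdef]
    simp only
    rw [natDegree_comp, descPochhammer_natDegree, natDegree_X_sub_C, mul_one]
  refine ⟨∑ j ∈ Finset.range (k + 1), C (c j) * P j, ?_, ?_⟩
  · -- degree = k
    have hck : c k ≠ 0 := by
      have hD : D k = (q.eval α)⁻¹ := by simp [hDdef, hhdef]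
      rw [hcdef]
      simp only [Nat.choose_self, Nat.cast_one, one_mul, hD]
      exact div_ne_zero (inv_ne_zero hq)
        (mul_ne_zero (Nat.cast_ne_zero.2 k.factorial_ne_zero) (pow_ne_zero _ hα))
    have hcoeff : (∑ j ∈ Finset.range (k + 1), C (c j) * P j).coeff k = c k := by
      rw [finset_sum_coeff, Finset.sum_range_succ]
      have h0 : ∀ j ∈ Finset.range k, (C (c j) * P j).coeff k = 0 := by
        intro j hj
        have hjk : j < k := Finset.mem_range.mp hj
        apply coeff_eq_zero_of_natDegree_lt
        calc (C (c j) * P j).natDegree ≤ (P j).natDegree := natDegree_C_mul_le _ _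
          _ < k := by rw [hPdeg j]; exact hjk
      rw [Finset.sum_eq_zero h0, zero_add, coeff_C_mul]
      have : (P k).coeff k = 1 := by
        have := (hPmonic k).coeff_natDegree
        rwa [hPdeg k] at this
      rw [this, mul_one]
    have hle : (∑ j ∈ Finset.range (k + 1), C (c j) * P j).degree ≤ (k : WithBot ℕ) := by
      refine (degree_sum_le _ _).trans (Finset.sup_le fun j hj => ?_)
      have hjk : j ≤ k := Nat.lt_succ_iff.mp (Finset.mem_range.mp hj)
      calc (C (c j) * P j).degree ≤ (C (c j)).degree + (P j).degree := degree_mul_le _ _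
        _ ≤ 0 + (P j).degree := add_le_add degree_C_le le_rfl
        _ = (P j).degree := zero_add _
        _ = (j : WithBot ℕ) := by
            rw [degree_eq_natDegree (hPmonic j).ne_zero, hPdeg j]
        _ ≤ (k : WithBot ℕ) := by exact_mod_cast hjk
    exact degree_eq_of_le_of_coeff_ne_zero hle (hcoeff ▸ hck)
  · -- evaluation
    intro n hn
    have hfun : (fun z : ℂ => z ^ (n - 1) / q.eval z) = fun z : ℂ => z ^ (n - 1) * h z := by
      funext z; rw [hhdef]; exact div_eq_mul_inv _ _
    rw [hfun]
    have hpow : ContDiff ℂ (⊤ : ℕ∞) fun z : ℂ => z ^ (n - 1) := contDiff_id.pow _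
    have hleib : iteratedDeriv k (fun z : ℂ => z ^ (n - 1) * h z) α =
        ∑ j ∈ Finset.range (k + 1), (k.choose j : ℂ) *
          iteratedDeriv j (fun z : ℂ => z ^ (n - 1)) α * D j :=
      my_leibniz hUo hpow hg k α hαU
    rw [hleib]
    have heval : (∑ j ∈ Finset.range (k + 1), C (c j) * P j).eval (n : ℂ) =
        ∑ j ∈ Finset.range (k + 1), c j * (((n - 1 : ℕ)).descFactorial j : ℂ) := by
      rw [eval_finset_sum]
      refine Finset.sum_congr rfl fun j hj => ?_
      rw [eval_mul, eval_C, hPdef]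
      simp only [eval_comp, eval_sub, eval_X, eval_C]
      have hn1 : (n : ℂ) - 1 = ((n - 1 : ℕ) : ℂ) := by
        rw [Nat.cast_sub hn, Nat.cast_one]
      rw [hn1, descPochhammer_eval_eq_descFactorial]
    rw [heval, Finset.mul_sum, Finset.sum_mul]
    refine Finset.sum_congr rfl fun j hj => ?_
    rw [my_iteratedDeriv_pow]
    rcases le_or_gt j (n - 1) with hjn | hjn
    · have hpows : α ^ (n - 1 - j) * α ^ (j + 1) = α ^ n := by
        rw [← pow_add]; congr 1; omega
      have hk0 : (k.factorial : ℂ) ≠ 0 := Nat.cast_ne_zero.2 k.factorial_ne_zero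
      have hα0 : α ^ (j + 1) ≠ 0 := pow_ne_zero _ hα
      rw [hcdef]
      simp only
      rw [← hpows]
      field_simp
    · have hdf : (n - 1).descFactorial j = 0 := Nat.descFactorial_eq_zero_iff_lt.mpr hjn
      simp [hdf]
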